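/- Let P be a finite (3+1)-free poset and A a P-array with rows r and r+1 given by chains a_1 <_P ⋯ <_P a_m and b_1 <_P ⋯ <_P b_n. Then any weak r alignment of A exists, and among all weak r alignments there is a unique minimal one with respect to the partial order in which φ ⪯ ψ iff every element's column in φ is weakly left of its column in ψ. -/

import Mathlib

/-- Two elements of a poset are incomparable. -/
def Incomp {α : Type*} [Preorder α] (x y : α) : Prop := ¬ x ≤ y ∧ ¬ y ≤ x

/-- A poset is (3+1)-free. -/
def ThreePlusOneFree (α : Type*) [Preorder α] : Prop :=
  ¬ ∃ a b c d : α, a < b ∧ b < c ∧ Incomp d a ∧ Incomp d b ∧ Incomp d c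

/-- A weak `r` alignment of the two rows `a_1 <_P ⋯ <_P a_m` (row `r`) and
`b_1 <_P ⋯ <_P b_n` (row `r+1`) of a `P`-array, recorded by the column assignments
`φa` and `φb` (columns indexed from 0):
(1) the columns are strictly increasing along each row;
(2) no occupied column is preceded by an empty one;
(3) if `b_j <_P a_i` then `b_j` is strictly left of `a_i`;
(4) if an element lies in column `c` and column `c+1` is nonempty, then some element
greater than it lies in column `c+1`. -/
def WeakAlign {P : Type*} [PartialOrder P] {m n : ℕ} (a : Fin m → P) (b : Fin n → P)
    (φa : Fin m → ℕ) (φb : Fin n → ℕ) : Prop :=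
  StrictMono φa ∧ StrictMono φb ∧
  (∀ c : ℕ, 0 < c → ((∃ i, φa i = c) ∨ (∃ j, φb j = c)) →
    ((∃ i, φa i = c - 1) ∨ (∃ j, φb j = c - 1))) ∧
  (∀ (i : Fin m) (j : Fin n), b j < a i → φb j < φa i) ∧
  (∀ i : Fin m, ((∃ i', φa i' = φa i + 1) ∨ (∃ j, φb j = φa i + 1)) →
    ((∃ i', φa i' = φa i + 1 ∧ a i < a i') ∨ (∃ j, φb j = φa i + 1 ∧ a i < b j))) ∧
  (∀ j : Fin n, ((∃ i, φa i = φb j + 1) ∨ (∃ j', φb j' = φb j + 1)) →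
    ((∃ i, φa i = φb j + 1 ∧ b j < a i) ∨ (∃ j', φb j' = φb j + 1 ∧ b j < b j')))

namespace StmtAux

/-- column `c` is occupied by the assignment `(f, g)` -/
def AOcc {m n : ℕ} (f : Fin m → ℕ) (g : Fin n → ℕ) (c : ℕ) : Prop :=
  (∃ i, f i = c) ∨ (∃ j, g j = c)

variable {P : Type*} [PartialOrder P] {m n : ℕ} {a : Fin m → P} {b : Fin n → P}
  {f f' : Fin m → ℕ} {g g' : Fin n → ℕ}

lemma occ_dc (h : WeakAlign a b f g) {c d : ℕ} (hcd : c ≤ d) (hd : AOcc f g d) :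
    AOcc f g c := by
  obtain ⟨k, rfl⟩ := Nat.exists_eq_add_of_le hcd
  induction k with
  | zero => simpa using hd
  | succ k ih =>
    apply ih (by omega)
    have := h.2.2.1 (c + (k+1)) (by omega) hd
    simpa [AOcc, show c + (k+1) - 1 = c + k by omega] using this

lemma strictMono_snoc {K : ℕ} (hf : StrictMono f) (hK : ∀ i, f i < K) :
    StrictMono (Fin.snoc f K : Fin (m+1) → ℕ) := by
  intro i j hij
  induction j using Fin.lastCases with
  | last =>
    have hi : i ≠ Fin.last m := ne_of_lt hij
    obtain ⟨i', rfl⟩ := Fin.exists_castSucc_eq.2 hi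
    simpa using hK i'
  | cast j' =>
    have hi : i ≠ Fin.last m := by
      intro hh; rw [hh] at hij
      exact absurd hij (not_lt.2 (Fin.le_last _))
    obtain ⟨i', rfl⟩ := Fin.exists_castSucc_eq.2 hi
    simpa using hf (by simpa [Fin.castSucc_lt_castSucc_iff] using hij)

/-- one-column step: an element below an occupied column has a larger element above it. -/
lemma step_lt (h : WeakAlign a b f g) (c : ℕ) (x : P)
    (hx : (∃ i, f i = c ∧ x = a i) ∨ (∃ j, g j = c ∧ x = b j))
    (hocc : AOcc f g (c + 1)) :
    ∃ y, ((∃ i, f i = c + 1 ∧ y = a i) ∨ (∃ j, g j = c + 1 ∧ y = b j)) ∧ x < y := by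
  rcases hx with ⟨i, hi, rfl⟩ | ⟨j, hj, rfl⟩
  · have := h.2.2.2.2.1 i (by rw [hi]; exact hocc)
    rcases this with ⟨i', hi', hlt⟩ | ⟨j', hj', hlt⟩
    · exact ⟨a i', Or.inl ⟨i', by omega, rfl⟩, hlt⟩
    · exact ⟨b j', Or.inr ⟨j', by omega, rfl⟩, hlt⟩
  · have := h.2.2.2.2.2 j (by rw [hj]; exact hocc)
    rcases this with ⟨i', hi', hlt⟩ | ⟨j', hj', hlt⟩
    · exact ⟨a i', Or.inl ⟨i', by omega, rfl⟩, hlt⟩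
    · exact ⟨b j', Or.inr ⟨j', by omega, rfl⟩, hlt⟩

/-- From any element in column `c`, occupied columns strictly to the right contain a
larger element. -/
lemma chain_lt (h : WeakAlign a b f g) (k : ℕ) (c : ℕ) (x : P)
    (hx : (∃ i, f i = c ∧ x = a i) ∨ (∃ j, g j = c ∧ x = b j))
    (hocc : AOcc f g (c + k + 1)) :
    ∃ y, ((∃ i, f i = c + k + 1 ∧ y = a i) ∨ (∃ j, g j = c + k + 1 ∧ y = b j)) ∧ x < y := by
  induction k generalizing c x with
  | zero => exact step_lt h c x hx hocc
  | succ k ih =>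
    have hocc' : AOcc f g (c + k + 1) := occ_dc h (by omega) hocc
    obtain ⟨y, hy, hxy⟩ := ih c x hx hocc'
    have h2 : AOcc f g ((c + k + 1) + 1) := by convert hocc using 2 <;> omega
    obtain ⟨z, hz, hyz⟩ := step_lt h (c + k + 1) y hy h2
    refine ⟨z, ?_, lt_trans hxy hyz⟩
    convert hz using 4 <;> constructor <;> intro <;> omega

lemma strictMono_min {u v : Fin m → ℕ} (hu : StrictMono u) (hv : StrictMono v) :
    StrictMono (fun i => min (u i) (v i)) := by
  intro i j hij
  exact lt_min_iff.2 ⟨(min_le_left (u i) (v i)).trans_lt (hu hij),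
    (min_le_right (u i) (v i)).trans_lt (hv hij)⟩

/-- condition (5) for the pointwise min, assuming the min at `i` is attained by `f`. -/
lemma aux5 (ha : StrictMono a) (hb : StrictMono b)
    (h : WeakAlign a b f g) (h' : WeakAlign a b f' g') (i : Fin m) (hfi : f i ≤ f' i)
    (hyp : (∃ i', min (f i') (f' i') = f i + 1) ∨ (∃ j, min (g j) (g' j) = f i + 1)) :
    (∃ i', min (f i') (f' i') = f i + 1 ∧ a i < a i') ∨
      (∃ j, min (g j) (g' j) = f i + 1 ∧ a i < b j) := by
  have Fmono : StrictMono (fun i => min (f i) (f' i)) := strictMono_min h.1 h'.1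
  by_cases hA : ∃ i', min (f i') (f' i') = f i + 1
  · obtain ⟨i', hi'⟩ := hA
    have hii' : i < i' := by
      have h0 : (fun i => min (f i) (f' i)) i < (fun i => min (f i) (f' i)) i' := by
        simp only [hi', min_eq_left hfi]; omega
      exact Fmono.lt_iff_lt.1 h0
    exact Or.inl ⟨i', hi', ha hii'⟩
  · obtain ⟨j, hj⟩ := hyp.resolve_left hA
    have noA : ∀ i'', f i'' ≠ f i + 1 := by
      intro i'' hi''
      have h2 : min (f i'') (f' i'') ≠ f i + 1 := fun hh => hA ⟨i'', hh⟩
      have h3 : (fun i => min (f i) (f' i)) i'' ≤ (fun i => min (f i) (f' i)) i := by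
        simp only [min_eq_left hfi]
        have := min_le_left (f i'') (f' i'')
        omega
      have h4 := h.1.monotone (Fmono.le_iff_le.1 h3)
      omega
    have hgj : f i + 1 ≤ g j := le_trans (le_of_eq hj.symm) (min_le_left _ _)
    by_cases hB : ∃ j', g j' = f i + 1
    · rcases h.2.2.2.2.1 i (Or.inr hB) with ⟨i'', hi'', _⟩ | ⟨j', hj', hlt⟩
      · exact absurd hi'' (noA i'')
      · have hj'j : j' ≤ j := h.2.1.le_iff_le.1 (by omega)
        have : b j' ≤ b j := hb.monotone hj'j
        exact Or.inr ⟨j, hj, lt_of_lt_of_le hlt this⟩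
    · exfalso
      have : AOcc f g (f i + 1) := occ_dc h hgj (Or.inr ⟨j, rfl⟩)
      rcases this with ⟨i'', hi''⟩ | ⟨j', hj'⟩
      · exact noA i'' hi''
      · exact hB ⟨j', hj'⟩

/-- condition (6) for the pointwise min, assuming the min at `j` is attained by `g`. -/
lemma aux6 (ha : StrictMono a) (hb : StrictMono b)
    (h : WeakAlign a b f g) (h' : WeakAlign a b f' g') (j : Fin n) (hgj : g j ≤ g' j)
    (hyp : (∃ i, min (f i) (f' i) = g j + 1) ∨ (∃ j', min (g j') (g' j') = g j + 1)) :
    (∃ i, min (f i) (f' i) = g j + 1 ∧ b j < a i) ∨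
      (∃ j', min (g j') (g' j') = g j + 1 ∧ b j < b j') := by
  have Gmono : StrictMono (fun j => min (g j) (g' j)) := strictMono_min h.2.1 h'.2.1
  by_cases hB : ∃ j', min (g j') (g' j') = g j + 1
  · obtain ⟨j', hj'⟩ := hB
    have hjj' : j < j' := by
      have h0 : (fun j => min (g j) (g' j)) j < (fun j => min (g j) (g' j)) j' := by
        simp only [hj', min_eq_left hgj]; omega
      exact Gmono.lt_iff_lt.1 h0
    exact Or.inr ⟨j', hj', hb hjj'⟩
  · obtain ⟨i, hi⟩ := hyp.resolve_right hB
    have noB : ∀ j'', g j'' ≠ g j + 1 := by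
      intro j'' hj''
      have h2 : min (g j'') (g' j'') ≠ g j + 1 := fun hh => hB ⟨j'', hh⟩
      have h3 : (fun j => min (g j) (g' j)) j'' ≤ (fun j => min (g j) (g' j)) j := by
        simp only [min_eq_left hgj]
        have := min_le_left (g j'') (g' j'')
        omega
      have h4 := h.2.1.monotone (Gmono.le_iff_le.1 h3)
      omega
    have hfi : g j + 1 ≤ f i := le_trans (le_of_eq hi.symm) (min_le_left _ _)
    by_cases hA : ∃ i'', f i'' = g j + 1
    · rcases h.2.2.2.2.2 j (Or.inl hA) with ⟨i'', hi'', hlt⟩ | ⟨j'', hj'', _⟩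
      · have hi''i : i'' ≤ i := h.1.le_iff_le.1 (by omega)
        exact Or.inl ⟨i, hi, lt_of_lt_of_le hlt (ha.monotone hi''i)⟩
      · exact absurd hj'' (noB j'')
    · exfalso
      have : AOcc f g (g j + 1) := occ_dc h hfi (Or.inl ⟨i, rfl⟩)
      rcases this with ⟨i'', hi''⟩ | ⟨j', hj'⟩
      · exact hA ⟨i'', hi''⟩
      · exact noB j' hj'


/-- the gap-freeness contradiction: if column `d` is empty for the pointwise min but
an `a` sits in column `d` of `(f,g)` and column `d` of `(f',g')` is occupied, contradiction. -/
lemma gapaux (hdisj : ∀ i j, a i ≠ b j)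
    (h : WeakAlign a b f g) (h' : WeakAlign a b f' g') (F : Fin m → ℕ) (G : Fin n → ℕ)
    (hF : ∀ i, F i = min (f i) (f' i)) (hG : ∀ j, G j = min (g j) (g' j)) (d : ℕ)
    (hnot : ¬ AOcc F G d) (hA : ∃ p, f p = d) (hocc' : AOcc f' g' d) : False := by
  obtain ⟨p, hp⟩ := hA
  have hnotF : ∀ i, F i ≠ d := fun i hi => hnot (Or.inl ⟨i, hi⟩)
  have hnotG : ∀ j, G j ≠ d := fun j hj => hnot (Or.inr ⟨j, hj⟩)
  have hf'p : f' p < d := by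
    have h1 := hnotF p
    rw [hF p, hp] at h1
    rcases le_total d (f' p) with hh | hh
    · simp [min_eq_left hh] at h1
    · rcases lt_or_eq_of_le hh with hh' | hh'
      · exact hh'
      · simp [hh', min_self] at h1
  -- no a in column d of (f',g')
  have noAψ : ∀ p', f' p' ≠ d := by
    intro p' hp'
    have hfp' : f p' < d := by
      have h1 := hnotF p'
      rw [hF p', hp'] at h1
      rcases le_total d (f p') with hh | hh
      · simp [min_eq_right hh] at h1
      · rcases lt_or_eq_of_le hh with hh' | hh'
        · exact hh'
        · simp [hh', min_self] at h1
    have h1 : p' < p := h.1.lt_iff_lt.1 (by omega)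
    have h2 : p < p' := h'.1.lt_iff_lt.1 (by omega)
    omega
  obtain ⟨q, hq⟩ := hocc'.resolve_left (by push_neg; exact noAψ)
  have hgq : g q < d := by
    have h1 := hnotG q
    rw [hG q, hq] at h1
    rcases le_total d (g q) with hh | hh
    · simp [min_eq_right hh] at h1
    · rcases lt_or_eq_of_le hh with hh' | hh'
      · exact hh'
      · simp [hh', min_self] at h1
  -- no b in column d of (f,g)
  have noBφ : ∀ q', g q' ≠ d := by
    intro q' hq'
    have hg'q' : g' q' < d := by
      have h1 := hnotG q'
      rw [hG q', hq'] at h1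
      rcases le_total d (g' q') with hh | hh
      · simp [min_eq_left hh] at h1
      · rcases lt_or_eq_of_le hh with hh' | hh'
        · exact hh'
        · simp [hh', min_self] at h1
    have h1 : q' < q := h'.2.1.lt_iff_lt.1 (by omega)
    have h2 : q < q' := h.2.1.lt_iff_lt.1 (by omega)
    omega
  -- chain in (f,g) from b q up to column d
  have harith : g q + (d - g q - 1) + 1 = d := by omega
  have hoccd : AOcc f g (g q + (d - g q - 1) + 1) := by rw [harith]; exact Or.inl ⟨p, hp⟩
  obtain ⟨y, hy, hlt⟩ := chain_lt h (d - g q - 1) (g q) (b q) (Or.inr ⟨q, rfl, rfl⟩) hoccd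
  rw [harith] at hy
  rcases hy with ⟨i, hi, rfl⟩ | ⟨j, hj, rfl⟩
  · have : i = p := h.1.injective (by omega)
    subst this
    have := h'.2.2.2.1 i q hlt
    omega
  · exact noBφ j hj

/-- The pointwise min of two weak alignments is a weak alignment. -/
lemma minclose (hdisj : ∀ i j, a i ≠ b j) (ha : StrictMono a) (hb : StrictMono b)
    (h : WeakAlign a b f g) (h' : WeakAlign a b f' g') (F : Fin m → ℕ) (G : Fin n → ℕ)
    (hF : ∀ i, F i = min (f i) (f' i)) (hG : ∀ j, G j = min (g j) (g' j)) :
    WeakAlign a b F G := by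
  have hFe : F = fun i => min (f i) (f' i) := funext hF
  have hGe : G = fun j => min (g j) (g' j) := funext hG
  have hF' : ∀ i, F i = min (f' i) (f i) := fun i => (hF i).trans (min_comm _ _)
  have hG' : ∀ j, G j = min (g' j) (g j) := fun j => (hG j).trans (min_comm _ _)
  refine ⟨?_, ?_, ?_, ?_, ?_, ?_⟩
  · rw [hFe]; exact strictMono_min h.1 h'.1
  · rw [hGe]; exact strictMono_min h.2.1 h'.2.1
  · -- gap-free
    rintro c hc hocc
    obtain ⟨d, rfl⟩ : ∃ d, c = d + 1 := ⟨c - 1, by omega⟩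
    simp only [Nat.add_sub_cancel]
    by_contra hnot
    -- both (f,g) and (f',g') occupy column d
    have hboth : AOcc f g d ∧ AOcc f' g' d := by
      rcases hocc with ⟨i, hi⟩ | ⟨j, hj⟩
      · rw [hF i] at hi
        have h1 : d ≤ f i := by have := min_le_left (f i) (f' i); omega
        have h2 : d ≤ f' i := by have := min_le_right (f i) (f' i); omega
        exact ⟨occ_dc h h1 (Or.inl ⟨i, rfl⟩), occ_dc h' h2 (Or.inl ⟨i, rfl⟩)⟩
      · rw [hG j] at hj
        have h1 : d ≤ g j := by have := min_le_left (g j) (g' j); omega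
        have h2 : d ≤ g' j := by have := min_le_right (g j) (g' j); omega
        exact ⟨occ_dc h h1 (Or.inr ⟨j, rfl⟩), occ_dc h' h2 (Or.inr ⟨j, rfl⟩)⟩
    have hnot' : ¬ AOcc F G d := hnot
    rcases hboth.1 with ⟨p, hp⟩ | ⟨q, hq⟩
    · exact gapaux hdisj h h' F G hF hG d hnot' ⟨p, hp⟩ hboth.2
    · rcases hboth.2 with ⟨p, hp⟩ | ⟨q', hq'⟩
      · exact gapaux (fun i j => hdisj i j) h' h F G hF' hG' d hnot' ⟨p, hp⟩ (Or.inr ⟨q, hq⟩)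
      · -- two b's in column d of both: contradiction
        have h1 : g' q < d := by
          have hh := fun hgg => hnot' (Or.inr ⟨q, hgg⟩)
          rw [hG q, hq] at hh
          rcases le_total d (g' q) with h2 | h2
          · simp [min_eq_left h2] at hh
          · rcases lt_or_eq_of_le h2 with h3 | h3
            · exact h3
            · simp [h3, min_self] at hh
        have h2 : g q' < d := by
          have hh := fun hgg => hnot' (Or.inr ⟨q', hgg⟩)
          rw [hG q', hq'] at hh
          rcases le_total d (g q') with h2 | h2
          · simp [min_eq_right h2] at hh
          · rcases lt_or_eq_of_le h2 with h3 | h3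
            · exact h3
            · simp [h3, min_self] at hh
        have h3 : q < q' := h'.2.1.lt_iff_lt.1 (by omega)
        have h4 : q' < q := h.2.1.lt_iff_lt.1 (by omega)
        omega
  · -- condition (3)
    intro i j hlt
    rw [hF i, hG j]
    have h1 := h.2.2.2.1 i j hlt
    have h2 := h'.2.2.2.1 i j hlt
    have h3 := min_le_left (g j) (g' j); have h4 := min_le_right (g j) (g' j)
    refine lt_min_iff.2 ⟨by omega, by omega⟩
  · -- condition (5)
    intro i hyp
    rcases le_total (f i) (f' i) with hfi | hfi
    · have e : F i = f i := (hF i).trans (min_eq_left hfi)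
      rw [e] at hyp ⊢
      have := aux5 ha hb h h' i hfi (by simpa only [hF, hG] using hyp)
      simpa only [← hF, ← hG] using this
    · have e : F i = f' i := (hF i).trans (min_eq_right hfi)
      rw [e] at hyp ⊢
      have := aux5 ha hb h' h i hfi (by simpa only [hF', hG'] using hyp)
      simpa only [← hF', ← hG'] using this
  · -- condition (6)
    intro j hyp
    rcases le_total (g j) (g' j) with hgj | hgj
    · have e : G j = g j := (hG j).trans (min_eq_left hgj)
      rw [e] at hyp ⊢
      have := aux6 ha hb h h' j hgj (by simpa only [hF, hG] using hyp)
      simpa only [← hF, ← hG] using this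
    · have e : G j = g' j := (hG j).trans (min_eq_right hgj)
      rw [e] at hyp ⊢
      have := aux6 ha hb h' h j hgj (by simpa only [hF', hG'] using hyp)
      simpa only [← hF', ← hG'] using this


lemma snoc_eq_iff {m K c : ℕ} {f' : Fin m → ℕ} :
    (∃ i : Fin (m+1), (Fin.snoc f' K : Fin (m+1) → ℕ) i = c) ↔
      ((∃ i : Fin m, f' i = c) ∨ c = K) := by
  constructor
  · rintro ⟨i, hi⟩
    induction i using Fin.lastCases with
    | last => right; simpa using hi.symm
    | cast i' => left; exact ⟨i', by simpa using hi⟩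
  · rintro (⟨i, hi⟩ | rfl)
    · exact ⟨Fin.castSucc i, by simpa using hi⟩
    · exact ⟨Fin.last m, by simp⟩

lemma exists_align : ∀ (m n : ℕ) (a : Fin m → P) (b : Fin n → P),
    StrictMono a → StrictMono b →
    ∃ (K : ℕ) (f : Fin m → ℕ) (g : Fin n → ℕ), WeakAlign a b f g ∧
      (∀ i, f i < K) ∧ (∀ j, g j < K) ∧ (∀ c, c < K → AOcc f g c) := by
  intro m
  induction m with
  | zero =>
    intro n a b _ hb
    refine ⟨n, fun i => i.elim0, fun j => (j : ℕ), ⟨fun i => i.elim0, fun j j' hh => hh,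
      ?_, fun i => i.elim0, fun i => i.elim0, ?_⟩, fun i => i.elim0, fun j => j.2, ?_⟩
    · rintro c hc (⟨i, _⟩ | ⟨j, hj⟩)
      · exact i.elim0
      · have hj2 : (j : ℕ) = c := hj
        have hj3 := j.isLt
        exact Or.inr ⟨⟨c - 1, by omega⟩, rfl⟩
    · rintro j (⟨i, _⟩ | ⟨j', hj'⟩)
      · exact i.elim0
      · have hj2 : (j' : ℕ) = (j : ℕ) + 1 := hj'
        exact Or.inr ⟨j', hj', hb (Fin.lt_def.2 (by omega))⟩
    · intro c hc
      exact Or.inr ⟨⟨c, hc⟩, rfl⟩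
  | succ m IH =>
    intro n a b ha hb
    match n with
    | 0 =>
      refine ⟨m + 1, fun i => (i : ℕ), fun j => j.elim0, ⟨fun i i' hh => hh,
        fun j => j.elim0, ?_, fun _ j => j.elim0, ?_, fun j => j.elim0⟩,
        fun i => i.2, fun j => j.elim0, ?_⟩
      · rintro c hc (⟨i, hi⟩ | ⟨j, _⟩)
        · have hi2 : (i : ℕ) = c := hi
          have hi3 := i.isLt
          exact Or.inl ⟨⟨c - 1, by omega⟩, rfl⟩
        · exact j.elim0
      · rintro i (⟨i', hi'⟩ | ⟨j, _⟩)
        · have hi2 : (i' : ℕ) = (i : ℕ) + 1 := hi'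
          exact Or.inl ⟨i', hi', ha (Fin.lt_def.2 (by omega))⟩
        · exact j.elim0
      · intro c hc
        exact Or.inl ⟨⟨c, hc⟩, rfl⟩
    | (n' + 1) =>
      have hcmono : StrictMono (fun i : Fin m => a i.castSucc) :=
        fun i j hij => ha (Fin.castSucc_lt_castSucc_iff.2 hij)
      by_cases hlt : b (Fin.last n') < a (Fin.last m)
      · -- the top `a` goes alone into a new last column
        obtain ⟨K, f', g, hW, hbf, hbg, hsurj⟩ := IH (n' + 1) _ b hcmono hb
        have hK : 0 < K := by have := hbg (Fin.last n'); omega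
        have hfc : ∀ i : Fin m, (Fin.snoc f' K : Fin (m+1) → ℕ) (Fin.castSucc i) = f' i :=
          fun i => by simp
        have hfl : (Fin.snoc f' K : Fin (m+1) → ℕ) (Fin.last m) = K := by simp
        refine ⟨K + 1, Fin.snoc f' K, g, ⟨strictMono_snoc hW.1 hbf, hW.2.1, ?_, ?_, ?_, ?_⟩,
          ?_, fun j => by have := hbg j; omega, ?_⟩
        · -- gap-free
          rintro c hc (hocc | ⟨j, hj⟩)
          · rcases snoc_eq_iff.1 hocc with h1 | rfl
            · rcases hW.2.2.1 c hc (Or.inl h1) with ⟨i, hi⟩ | hB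
              · exact Or.inl ⟨Fin.castSucc i, by simpa using hi⟩
              · exact Or.inr hB
            · rcases hsurj (c - 1) (by omega) with ⟨i, hi⟩ | hB
              · exact Or.inl ⟨Fin.castSucc i, by simpa using hi⟩
              · exact Or.inr hB
          · rcases hW.2.2.1 c hc (Or.inr ⟨j, hj⟩) with ⟨i, hi⟩ | hB
            · exact Or.inl ⟨Fin.castSucc i, by simpa using hi⟩
            · exact Or.inr hB
        · -- condition (3)
          intro i j hij
          induction i using Fin.lastCases with
          | last => rw [hfl]; exact hbg j
          | cast i' => rw [hfc]; exact hW.2.2.2.1 i' j hij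
        · -- condition (5)
          intro i hyp
          induction i using Fin.lastCases with
          | last =>
            exfalso
            rw [hfl] at hyp
            rcases hyp with ⟨i', hi'⟩ | ⟨j, hj⟩
            · rcases snoc_eq_iff.1 ⟨i', hi'⟩ with ⟨i'', hi''⟩ | h2
              · have := hbf i''; omega
              · omega
            · have := hbg j; omega
          | cast i' =>
            rw [hfc] at hyp ⊢
            by_cases hK2 : f' i' + 1 = K
            · exact Or.inl ⟨Fin.last m, by rw [hfl, hK2], ha (Fin.castSucc_lt_last i')⟩
            · have hypold : (∃ i'', f' i'' = f' i' + 1) ∨ (∃ j, g j = f' i' + 1) := by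
                rcases hyp with ⟨i'', hi''⟩ | hB
                · rcases snoc_eq_iff.1 ⟨i'', hi''⟩ with h1 | h2
                  · exact Or.inl h1
                  · exact absurd h2 hK2
                · exact Or.inr hB
              rcases hW.2.2.2.2.1 i' hypold with ⟨i'', hi'', hlt'⟩ | ⟨j, hj, hlt'⟩
              · exact Or.inl ⟨Fin.castSucc i'', by rw [hfc]; exact hi'', hlt'⟩
              · exact Or.inr ⟨j, hj, hlt'⟩
        · -- condition (6)
          intro j hyp
          by_cases hK2 : g j + 1 = K
          · exact Or.inl ⟨Fin.last m, by rw [hfl]; omega,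
              lt_of_le_of_lt (hb.monotone (Fin.le_last j)) hlt⟩
          · have hypold : (∃ i, f' i = g j + 1) ∨ (∃ j', g j' = g j + 1) := by
              rcases hyp with ⟨i, hi⟩ | hB
              · rcases snoc_eq_iff.1 ⟨i, hi⟩ with h1 | h2
                · exact Or.inl h1
                · exact absurd h2 hK2
              · exact Or.inr hB
            rcases hW.2.2.2.2.2 j hypold with ⟨i, hi, hlt'⟩ | ⟨j', hj', hlt'⟩
            · exact Or.inl ⟨Fin.castSucc i, by rw [hfc]; exact hi, hlt'⟩
            · exact Or.inr ⟨j', hj', hlt'⟩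
        · -- bound on f
          intro i
          induction i using Fin.lastCases with
          | last => rw [hfl]; omega
          | cast i' => rw [hfc]; have := hbf i'; omega
        · -- surjectivity
          intro c hc
          rcases Nat.lt_or_ge c K with h1 | h1
          · rcases hsurj c h1 with ⟨i, hi⟩ | hB
            · exact Or.inl ⟨Fin.castSucc i, by simpa using hi⟩
            · exact Or.inr hB
          · have : c = K := by omega
            exact Or.inl ⟨Fin.last m, by rw [hfl, this]⟩
      · -- the top `a` and the top `b` share a new last column
        have hdmono : StrictMono (fun j : Fin n' => b j.castSucc) :=
          fun i j hij => hb (Fin.castSucc_lt_castSucc_iff.2 hij)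
        obtain ⟨K, f', g', hW, hbf, hbg, hsurj⟩ := IH n' _ _ hcmono hdmono
        have hfc : ∀ i : Fin m, (Fin.snoc f' K : Fin (m+1) → ℕ) (Fin.castSucc i) = f' i :=
          fun i => by simp
        have hfl : (Fin.snoc f' K : Fin (m+1) → ℕ) (Fin.last m) = K := by simp
        have hgc : ∀ j : Fin n', (Fin.snoc g' K : Fin (n'+1) → ℕ) (Fin.castSucc j) = g' j :=
          fun j => by simp
        have hgl : (Fin.snoc g' K : Fin (n'+1) → ℕ) (Fin.last n') = K := by simp
        refine ⟨K + 1, Fin.snoc f' K, Fin.snoc g' K,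
          ⟨strictMono_snoc hW.1 hbf, strictMono_snoc hW.2.1 hbg, ?_, ?_, ?_, ?_⟩,
          ?_, ?_, ?_⟩
        · -- gap-free
          rintro c hc hocc
          have : AOcc f' g' c ∨ c = K := by
            rcases hocc with h1 | h1
            · rcases snoc_eq_iff.1 h1 with h2 | h2
              · exact Or.inl (Or.inl h2)
              · exact Or.inr h2
            · rcases snoc_eq_iff.1 h1 with h2 | h2
              · exact Or.inl (Or.inr h2)
              · exact Or.inr h2
          have key : AOcc f' g' (c - 1) := by
            rcases this with h1 | rfl
            · exact hW.2.2.1 c hc h1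
            · exact hsurj (c - 1) (by omega)
          rcases key with ⟨i, hi⟩ | ⟨j, hj⟩
          · exact Or.inl ⟨Fin.castSucc i, by simpa using hi⟩
          · exact Or.inr ⟨Fin.castSucc j, by simpa using hj⟩
        · -- condition (3)
          intro i j hij
          induction i using Fin.lastCases with
          | last =>
            induction j using Fin.lastCases with
            | last => exact absurd hij hlt
            | cast j' => rw [hfl, hgc]; exact hbg j'
          | cast i' =>
            induction j using Fin.lastCases with
            | last =>
              exfalso
              exact hlt (lt_of_lt_of_le hij (ha.monotone (Fin.le_last _)))
            | cast j' => rw [hfc, hgc]; exact hW.2.2.2.1 i' j' hij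
        · -- condition (5)
          intro i hyp
          induction i using Fin.lastCases with
          | last =>
            exfalso
            rw [hfl] at hyp
            rcases hyp with ⟨i', hi'⟩ | ⟨j, hj⟩
            · rcases snoc_eq_iff.1 ⟨i', hi'⟩ with ⟨i'', hi''⟩ | h2
              · have := hbf i''; omega
              · omega
            · rcases snoc_eq_iff.1 ⟨j, hj⟩ with ⟨j', hj'⟩ | h2
              · have := hbg j'; omega
              · omega
          | cast i' =>
            rw [hfc] at hyp ⊢
            by_cases hK2 : f' i' + 1 = K
            · exact Or.inl ⟨Fin.last m, by rw [hfl, hK2], ha (Fin.castSucc_lt_last i')⟩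
            · have hypold : (∃ i'', f' i'' = f' i' + 1) ∨ (∃ j, g' j = f' i' + 1) := by
                rcases hyp with ⟨i'', hi''⟩ | ⟨j, hj⟩
                · rcases snoc_eq_iff.1 ⟨i'', hi''⟩ with h1 | h2
                  · exact Or.inl h1
                  · exact absurd h2 hK2
                · rcases snoc_eq_iff.1 ⟨j, hj⟩ with h1 | h2
                  · exact Or.inr h1
                  · exact absurd h2 hK2
              rcases hW.2.2.2.2.1 i' hypold with ⟨i'', hi'', hlt'⟩ | ⟨j, hj, hlt'⟩
              · exact Or.inl ⟨Fin.castSucc i'', by rw [hfc]; exact hi'', hlt'⟩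
              · exact Or.inr ⟨Fin.castSucc j, by rw [hgc]; exact hj, hlt'⟩
        · -- condition (6)
          intro j hyp
          induction j using Fin.lastCases with
          | last =>
            exfalso
            rw [hgl] at hyp
            rcases hyp with ⟨i', hi'⟩ | ⟨j', hj'⟩
            · rcases snoc_eq_iff.1 ⟨i', hi'⟩ with ⟨i'', hi''⟩ | h2
              · have := hbf i''; omega
              · omega
            · rcases snoc_eq_iff.1 ⟨j', hj'⟩ with ⟨j'', hj''⟩ | h2
              · have := hbg j''; omega
              · omega
          | cast j' =>
            rw [hgc] at hyp ⊢
            by_cases hK2 : g' j' + 1 = K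
            · exact Or.inr ⟨Fin.last n', by rw [hgl, hK2], hb (Fin.castSucc_lt_last j')⟩
            · have hypold : (∃ i, f' i = g' j' + 1) ∨ (∃ j'', g' j'' = g' j' + 1) := by
                rcases hyp with ⟨i, hi⟩ | ⟨j'', hj''⟩
                · rcases snoc_eq_iff.1 ⟨i, hi⟩ with h1 | h2
                  · exact Or.inl h1
                  · exact absurd h2 hK2
                · rcases snoc_eq_iff.1 ⟨j'', hj''⟩ with h1 | h2
                  · exact Or.inr h1
                  · exact absurd h2 hK2
              rcases hW.2.2.2.2.2 j' hypold with ⟨i, hi, hlt'⟩ | ⟨j'', hj'', hlt'⟩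
              · exact Or.inl ⟨Fin.castSucc i, by rw [hfc]; exact hi, hlt'⟩
              · exact Or.inr ⟨Fin.castSucc j'', by rw [hgc]; exact hj'', hlt'⟩
        · -- bound on f
          intro i
          induction i using Fin.lastCases with
          | last => rw [hfl]; omega
          | cast i' => rw [hfc]; have := hbf i'; omega
        · -- bound on g
          intro j
          induction j using Fin.lastCases with
          | last => rw [hgl]; omega
          | cast j' => rw [hgc]; have := hbg j'; omega
        · -- surjectivity
          intro c hc
          rcases Nat.lt_or_ge c K with h1 | h1
          · rcases hsurj c h1 with ⟨i, hi⟩ | ⟨j, hj⟩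
            · exact Or.inl ⟨Fin.castSucc i, by simpa using hi⟩
            · exact Or.inr ⟨Fin.castSucc j, by simpa using hj⟩
          · have : c = K := by omega
            exact Or.inl ⟨Fin.last m, by rw [hfl, this]⟩

end StmtAux

/-- For a (3+1)-free poset and rows given by disjoint chains, weak `r` alignments exist
and there is a unique minimal one with respect to the columnwise order. -/
theorem stmt_11 {P : Type*} [PartialOrder P] [Fintype P] (h31 : ThreePlusOneFree P)
    {m n : ℕ} (a : Fin m → P) (b : Fin n → P) (ha : StrictMono a) (hb : StrictMono b)
    (hdisj : ∀ i j, a i ≠ b j) :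
    (∃ φ : (Fin m → ℕ) × (Fin n → ℕ), WeakAlign a b φ.1 φ.2) ∧
    (∃! φ : (Fin m → ℕ) × (Fin n → ℕ), WeakAlign a b φ.1 φ.2 ∧
      ∀ ψ : (Fin m → ℕ) × (Fin n → ℕ), WeakAlign a b ψ.1 ψ.2 →
        (∀ i, φ.1 i ≤ ψ.1 i) ∧ (∀ j, φ.2 j ≤ ψ.2 j)) := by
  obtain ⟨K, f0, g0, hW0, -, -, -⟩ := StmtAux.exists_align m n a b ha hb
  refine ⟨⟨(f0, g0), hW0⟩, ?_⟩
  set T : Set ℕ := {s | ∃ p : (Fin m → ℕ) × (Fin n → ℕ),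
    WeakAlign a b p.1 p.2 ∧ (∑ i, p.1 i) + (∑ j, p.2 j) = s} with hT
  have hTne : T.Nonempty := ⟨_, (f0, g0), hW0, rfl⟩
  obtain ⟨s, hs, hmin⟩ := wellFounded_lt.has_min T hTne
  obtain ⟨φ0, hφ0, hsum⟩ := hs
  have key : ∀ ψ : (Fin m → ℕ) × (Fin n → ℕ), WeakAlign a b ψ.1 ψ.2 →
      (∀ i, φ0.1 i ≤ ψ.1 i) ∧ (∀ j, φ0.2 j ≤ ψ.2 j) := by
    intro ψ hψ
    set χ : (Fin m → ℕ) × (Fin n → ℕ) :=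
      (fun i => min (φ0.1 i) (ψ.1 i), fun j => min (φ0.2 j) (ψ.2 j)) with hχ
    have hχW : WeakAlign a b χ.1 χ.2 :=
      StmtAux.minclose hdisj ha hb hφ0 hψ _ _ (fun _ => rfl) (fun _ => rfl)
    have hχT : (∑ i, χ.1 i) + (∑ j, χ.2 j) ∈ T := ⟨χ, hχW, rfl⟩
    have hnlt := hmin _ hχT
    have hle1 : (∑ i, χ.1 i) ≤ ∑ i, φ0.1 i :=
      Finset.sum_le_sum (fun i _ => min_le_left _ _)
    have hle2 : (∑ j, χ.2 j) ≤ ∑ j, φ0.2 j :=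
      Finset.sum_le_sum (fun j _ => min_le_left _ _)
    constructor
    · intro i
      by_contra hcon
      push_neg at hcon
      have hstrict : (∑ i, χ.1 i) < ∑ i, φ0.1 i :=
        Finset.sum_lt_sum (fun i _ => min_le_left _ _)
          ⟨i, Finset.mem_univ i,
            by rw [show χ.1 i = min (φ0.1 i) (ψ.1 i) from rfl, min_eq_right hcon.le]
               exact hcon⟩
      exact hnlt (by omega)
    · intro j
      by_contra hcon
      push_neg at hcon
      have hstrict : (∑ j, χ.2 j) < ∑ j, φ0.2 j :=
        Finset.sum_lt_sum (fun j _ => min_le_left _ _)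
          ⟨j, Finset.mem_univ j,
            by rw [show χ.2 j = min (φ0.2 j) (ψ.2 j) from rfl, min_eq_right hcon.le]
               exact hcon⟩
      exact hnlt (by omega)
  refine ⟨φ0, ⟨hφ0, key⟩, ?_⟩
  rintro ψ ⟨hψW, hψkey⟩
  have h1 := key ψ hψW
  have h2 := hψkey φ0 hφ0
  obtain ⟨ψ1, ψ2⟩ := ψ
  obtain ⟨φ1, φ2⟩ := φ0
  simp only [Prod.mk.injEq]
  exact ⟨funext fun i => le_antisymm (h2.1 i) (h1.1 i),
    funext fun j => le_antisymm (h2.2 j) (h1.2 j)⟩
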